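/- For a q-ary input discrete channel W with symmetric capacity I(W) = Σ_x Σ_y (1/q) W(y|x) log_q( W(y|x) / ((1/q) Σ_{x'} W(y|x')) ), one has I(W) ≥ log_q( q / (1 + (q-1) Z(W)) ), where Z(W) is the average Bhattacharyya parameter. -/

import Mathlib

open Finset

/-- Symmetric capacity of a channel with uniform input, in base-`q` logarithm
(`q` = input alphabet size). -/
noncomputable def symCapQ {X Y : Type*} [Fintype X] [Fintype Y] (W : X → Y → ℝ) : ℝ :=
  (∑ x, ∑ y, (Fintype.card X : ℝ)⁻¹ * W x y *
      Real.log (W x y / ((Fintype.card X : ℝ)⁻¹ * ∑ x', W x' y))) /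
    Real.log (Fintype.card X)

/-- Average Bhattacharyya parameter of a channel. -/
noncomputable def Zavg {X Y : Type*} [Fintype X] [Fintype Y] [DecidableEq X]
    (W : X → Y → ℝ) : ℝ :=
  ((Fintype.card X : ℝ) * ((Fintype.card X : ℝ) - 1))⁻¹ *
    ∑ x, ∑ x' ∈ univ.filter (· ≠ x), ∑ y, Real.sqrt (W x y * W x' y)

/-- `I(W) ≥ log_q ( q / (1 + (q-1) Z(W)) )`: the symmetric capacity dominates the
symmetric cutoff rate. -/
lemma jensen_kl {ι : Type*} [Fintype ι] (p r : ι → ℝ)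
    (hpn : ∀ i, 0 ≤ p i) (hrn : ∀ i, 0 ≤ r i) (hp1 : ∑ i, p i = 1)
    (hzero : ∀ i, r i = 0 → p i = 0) :
    -2 * Real.log (∑ i, Real.sqrt (p i * r i)) ≤ ∑ i, p i * Real.log (p i / r i) := by
  classical
  set s : Finset ι := univ.filter (fun i => 0 < p i) with hs
  have hmem : ∀ i ∈ s, 0 < p i := fun i hi => (mem_filter.mp hi).2
  have hrpos : ∀ i ∈ s, 0 < r i := by
    intro i hi
    rcases (hrn i).lt_or_eq with h | h
    · exact h
    · exact absurd (hzero i h.symm) (hmem i hi).ne'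
  have hs_sum : ∑ i ∈ s, p i = 1 := by
    rw [← hp1]
    refine Finset.sum_subset (filter_subset _ _) ?_
    intro i _ hi
    have := (hpn i)
    simp only [hs, mem_filter, mem_univ, true_and, not_lt] at hi
    linarith
  have hne : s.Nonempty := by
    rcases Finset.eq_empty_or_nonempty s with h | h
    · rw [h] at hs_sum; simp at hs_sum
    · exact h
  -- Jensen
  have key := (strictConcaveOn_log_Ioi.concaveOn).le_map_sum (t := s) (w := p)
    (p := fun i => Real.sqrt (r i / p i)) (fun i hi => (hmem i hi).le) hs_sum
    (fun i hi => Set.mem_Ioi.mpr (Real.sqrt_pos.mpr (div_pos (hrpos i hi) (hmem i hi))))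
  simp only [smul_eq_mul] at key
  have h1 : ∀ i ∈ s, p i * Real.sqrt (r i / p i) = Real.sqrt (p i * r i) := by
    intro i hi
    rw [show p i * r i = p i ^ 2 * (r i / p i) by field_simp [(hmem i hi).ne'],
      Real.sqrt_mul (sq_nonneg _), Real.sqrt_sq (hmem i hi).le]
  have h2 : ∀ i ∈ s, p i * Real.log (Real.sqrt (r i / p i))
      = -(1/2) * (p i * Real.log (p i / r i)) := by
    intro i hi
    rw [Real.log_sqrt (div_nonneg (hrpos i hi).le (hmem i hi).le),
      Real.log_div (hmem i hi).ne' (hrpos i hi).ne']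
    rw [Real.log_div (hrpos i hi).ne' (hmem i hi).ne']
    ring
  rw [Finset.sum_congr rfl h1, Finset.sum_congr rfl h2] at key
  have hspos : 0 < ∑ i ∈ s, Real.sqrt (p i * r i) := by
    refine Finset.sum_pos ?_ hne
    intro i hi
    exact Real.sqrt_pos.mpr (mul_pos (hmem i hi) (hrpos i hi))
  have hle : ∑ i ∈ s, Real.sqrt (p i * r i) ≤ ∑ i, Real.sqrt (p i * r i) :=
    Finset.sum_le_sum_of_subset_of_nonneg (filter_subset _ _)
      (fun i _ _ => Real.sqrt_nonneg _)
  have hlog := Real.log_le_log hspos hle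
  have hTeq : ∑ i ∈ s, p i * Real.log (p i / r i) = ∑ i, p i * Real.log (p i / r i) := by
    refine Finset.sum_subset (filter_subset _ _) ?_
    intro i _ hi
    simp only [hs, mem_filter, mem_univ, true_and, not_lt] at hi
    have : p i = 0 := le_antisymm hi (hpn i)
    simp [this]
  rw [show ∑ x ∈ s, -(1/2) * (p x * Real.log (p x / r x))
      = -(1/2) * ∑ x ∈ s, p x * Real.log (p x / r x) by rw [Finset.mul_sum]] at key
  linarith [key, hlog, hTeq]

theorem symCap_ge_cutoff' {X Y : Type*} [Fintype X] [Fintype Y] [DecidableEq X]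
    (W : X → Y → ℝ) (hq : 2 ≤ Fintype.card X)
    (hnn : ∀ x y, 0 ≤ W x y) (hsum : ∀ x, ∑ y, W x y = 1) :
    Real.log ((Fintype.card X : ℝ) /
        (1 + ((Fintype.card X : ℝ) - 1) * ((((Fintype.card X : ℝ) * ((Fintype.card X : ℝ) - 1))⁻¹ *
    ∑ x, ∑ x' ∈ univ.filter (· ≠ x), ∑ y, Real.sqrt (W x y * W x' y))))) ≤
      (∑ x, ∑ y, (Fintype.card X : ℝ)⁻¹ * W x y *
      Real.log (W x y / ((Fintype.card X : ℝ)⁻¹ * ∑ x', W x' y))) := by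
  set n : ℝ := (Fintype.card X : ℝ) with hn
  have hn2 : (2:ℝ) ≤ n := by rw [hn]; exact_mod_cast hq
  have hn0 : (0:ℝ) < n := by linarith
  have hni : (0:ℝ) < n⁻¹ := inv_pos.mpr hn0
  set D : ℝ := ∑ x, ∑ x' ∈ univ.filter (· ≠ x), ∑ y, Real.sqrt (W x y * W x' y) with hD
  have hDnn : 0 ≤ D := by
    refine Finset.sum_nonneg fun x _ => Finset.sum_nonneg fun x' _ =>
      Finset.sum_nonneg fun y _ => Real.sqrt_nonneg _
  set Z : ℝ := (n * (n-1))⁻¹ * D with hZ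
  have hZnn : 0 ≤ Z := mul_nonneg (inv_nonneg.mpr (by nlinarith)) hDnn
  set B : ℝ := 1 + (n - 1) * Z with hB
  have hB1 : (1:ℝ) ≤ B := by nlinarith
  have hB0 : (0:ℝ) < B := by linarith
  -- the distributions on X × Y
  set P : Y → ℝ := fun y => n⁻¹ * ∑ x', W x' y with hP
  have hPnn : ∀ y, 0 ≤ P y := fun y =>
    mul_nonneg hni.le (Finset.sum_nonneg fun x _ => hnn x y)
  set p : X × Y → ℝ := fun z => n⁻¹ * W z.1 z.2 with hp
  set r : X × Y → ℝ := fun z => n⁻¹ * P z.2 with hr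
  have hpn : ∀ z, 0 ≤ p z := fun z => mul_nonneg hni.le (hnn _ _)
  have hrn : ∀ z, 0 ≤ r z := fun z => mul_nonneg hni.le (hPnn _)
  have hp1 : ∑ z, p z = 1 := by
    rw [Fintype.sum_prod_type]
    have h1 : ∀ x : X, ∑ y, p (x, y) = n⁻¹ := by
      intro x
      simp only [hp]
      rw [← Finset.mul_sum, hsum x, mul_one]
    rw [Finset.sum_congr rfl (fun x _ => h1 x), Finset.sum_const, Finset.card_univ,
      nsmul_eq_mul, ← hn, mul_inv_cancel₀ hn0.ne']
  have hzero : ∀ z, r z = 0 → p z = 0 := by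
    intro z hz
    have h1 : P z.2 = 0 := by
      have := mul_eq_zero.mp hz
      rcases this with h | h
      · exact absurd h (inv_ne_zero hn0.ne')
      · exact h
    have h2 : ∑ x', W x' z.2 = 0 := by
      have := mul_eq_zero.mp h1
      rcases this with h | h
      · exact absurd h (inv_ne_zero hn0.ne')
      · exact h
    have h3 : W z.1 z.2 = 0 :=
      (Finset.sum_eq_zero_iff_of_nonneg (fun x _ => hnn x z.2)).mp h2 z.1 (mem_univ _)
    simp [hp, h3]
  -- rewrite the capacity numerator
  have hnum : (∑ x, ∑ y, n⁻¹ * W x y * Real.log (W x y / (n⁻¹ * ∑ x', W x' y)))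
      = ∑ z, p z * Real.log (p z / r z) := by
    rw [Fintype.sum_prod_type]
    refine Finset.sum_congr rfl fun x _ => Finset.sum_congr rfl fun y _ => ?_
    have : p (x, y) / r (x, y) = W x y / (n⁻¹ * ∑ x', W x' y) := by
      simp only [hp, hr, hP]
      rw [mul_div_mul_left _ _ (inv_ne_zero hn0.ne')]
    rw [this]
  -- the Bhattacharyya-type sum
  set S : Y → ℝ := fun y => n⁻¹ * ∑ x, Real.sqrt (W x y) with hS
  have hSnn : ∀ y, 0 ≤ S y :=
    fun y => mul_nonneg hni.le (Finset.sum_nonneg fun x _ => Real.sqrt_nonneg _)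
  have hsq : ∑ z, Real.sqrt (p z * r z) = ∑ y, Real.sqrt (P y) * S y := by
    rw [Fintype.sum_prod_type, Finset.sum_comm]
    refine Finset.sum_congr rfl fun y _ => ?_
    have h1 : ∀ x : X, Real.sqrt (p (x, y) * r (x, y))
        = Real.sqrt (P y) * (n⁻¹ * Real.sqrt (W x y)) := by
      intro x
      simp only [hp, hr]
      rw [show n⁻¹ * W x y * (n⁻¹ * P y) = (n⁻¹)^2 * (W x y * P y) by ring,
        Real.sqrt_mul (sq_nonneg _), Real.sqrt_sq hni.le,
        Real.sqrt_mul (hnn x y)]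
      ring
    rw [Finset.sum_congr rfl (fun x _ => h1 x), ← Finset.mul_sum, ← Finset.mul_sum]
  have hPsum : ∑ y, P y = 1 := by
    simp only [hP]
    rw [← Finset.mul_sum, Finset.sum_comm,
      Finset.sum_congr rfl (fun x (_ : x ∈ univ) => hsum x), Finset.sum_const,
      Finset.card_univ, nsmul_eq_mul, mul_one, ← hn, inv_mul_cancel₀ hn0.ne']
  -- Cauchy–Schwarz
  have hCS : ∑ y, Real.sqrt (P y) * S y ≤ Real.sqrt (∑ y, S y ^ 2) := by
    have := Real.sum_sqrt_mul_sqrt_le (univ : Finset Y) (f := P) (g := fun y => S y ^ 2)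
      hPnn (fun y => sq_nonneg _)
    have h2 : ∀ y : Y, Real.sqrt (S y ^ 2) = S y := fun y => Real.sqrt_sq (hSnn y)
    simp only [h2] at this
    rwa [hPsum, Real.sqrt_one, one_mul] at this
  -- the combinatorial identity
  have hid : ∑ y, S y ^ 2 = n⁻¹ * B := by
    have h1 : ∀ y : Y, S y ^ 2 = (n⁻¹)^2 * ∑ x, ∑ x', Real.sqrt (W x y * W x' y) := by
      intro y
      simp only [hS, mul_pow]
      congr 1
      rw [sq, Finset.sum_mul_sum]
      refine Finset.sum_congr rfl fun x _ => Finset.sum_congr rfl fun x' _ => ?_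
      rw [Real.sqrt_mul (hnn x y)]
    rw [Finset.sum_congr rfl (fun y _ => h1 y), ← Finset.mul_sum]
    have h2 : ∑ y : Y, ∑ x, ∑ x', Real.sqrt (W x y * W x' y) = n + D := by
      rw [Finset.sum_comm]
      have h3 : ∀ x : X, ∑ y, ∑ x', Real.sqrt (W x y * W x' y)
          = 1 + ∑ x' ∈ univ.filter (· ≠ x), ∑ y, Real.sqrt (W x y * W x' y) := by
        intro x
        rw [Finset.sum_comm, Finset.filter_ne',
          ← Finset.add_sum_erase univ _ (mem_univ x)]
        congr 1
        have : ∀ y : Y, Real.sqrt (W x y * W x y) = W x y :=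
          fun y => Real.sqrt_mul_self (hnn x y)
        rw [Finset.sum_congr rfl (fun y _ => this y), hsum x]
      rw [Finset.sum_congr rfl (fun x _ => h3 x), Finset.sum_add_distrib]
      simp [hD, Finset.card_univ, hn]
    rw [h2, hB, hZ]
    have hne : n * (n - 1) ≠ 0 := by nlinarith
    have hne1 : n - 1 ≠ 0 := by linarith
    field_simp
  -- positivity of the Bhattacharyya sum
  have hsq0 : 0 < ∑ z, Real.sqrt (p z * r z) := by
    have hex : ∃ z : X × Y, 0 < p z := by
      by_contra h
      push_neg at h
      have : ∑ z, p z = 0 :=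
        Finset.sum_eq_zero fun z _ => le_antisymm (h z) (hpn z)
      rw [hp1] at this; norm_num at this
    obtain ⟨z, hz⟩ := hex
    have hrz : 0 < r z := by
      rcases (hrn z).lt_or_eq with h | h
      · exact h
      · exact absurd (hzero z h.symm) hz.ne'
    refine Finset.sum_pos' (fun z _ => Real.sqrt_nonneg _) ⟨z, mem_univ _, ?_⟩
    exact Real.sqrt_pos.mpr (mul_pos hz hrz)
  -- combine
  have hA0 : (0:ℝ) < n⁻¹ * B := mul_pos hni hB0
  have hle : ∑ z, Real.sqrt (p z * r z) ≤ Real.sqrt (n⁻¹ * B) := by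
    rw [hsq]; rw [← hid]; exact hCS
  have hlog : Real.log (∑ z, Real.sqrt (p z * r z)) ≤ Real.log (Real.sqrt (n⁻¹ * B)) :=
    Real.log_le_log hsq0 hle
  have hj := jensen_kl p r hpn hrn hp1 hzero
  have hfin : Real.log (n / B) = -2 * Real.log (Real.sqrt (n⁻¹ * B)) := by
    rw [Real.log_sqrt hA0.le]
    have : n / B = (n⁻¹ * B)⁻¹ := by
      rw [mul_inv, inv_inv, div_eq_mul_inv]
    rw [this, Real.log_inv]
    ring
  rw [hnum, hfin]
  linarith

theorem symCap_ge_cutoff {X Y : Type*} [Fintype X] [Fintype Y] [DecidableEq X]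
    (W : X → Y → ℝ) (hq : 2 ≤ Fintype.card X)
    (hnn : ∀ x y, 0 ≤ W x y) (hsum : ∀ x, ∑ y, W x y = 1) :
    Real.log ((Fintype.card X : ℝ) /
        (1 + ((Fintype.card X : ℝ) - 1) * Zavg W)) / Real.log (Fintype.card X) ≤
      symCapQ W := by
  have h1 : (1:ℝ) < (Fintype.card X : ℝ) := by
    have : (2:ℝ) ≤ (Fintype.card X : ℝ) := by exact_mod_cast hq
    linarith
  have hlogn : 0 < Real.log (Fintype.card X : ℝ) := Real.log_pos h1
  unfold symCapQ Zavg
  exact (div_le_div_iff_of_pos_right hlogn).mpr (symCap_ge_cutoff' W hq hnn hsum)
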